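/- Let n be a positive integer, let u, v ∈ F_2^n and let L ∈ GL_n(F_2). Set P = D_u·T_v·ρ(L) and Q = D_v·T_u·ρ((L^{-1})ᵀ). Then P·S_n·Qᵀ = (-1)^{⟨u,v⟩}·S_n. -/

import Mathlib

/-- The sign `(-1)^x` attached to an element `x ∈ F₂`. -/
def sgn (x : ZMod 2) : ℝ := (-1 : ℝ) ^ x.val

/-- The standard bilinear form `⟨a, b⟩ = aᵀ b` on `F₂ⁿ`. -/
def bform {n : ℕ} (a b : Fin n → ZMod 2) : ZMod 2 := ∑ i, a i * b i

/-- The Sylvester matrix of order `2^n`, with rows and columns indexed by `F₂ⁿ`,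
whose `(a, b)` entry is `(-1)^⟨a,b⟩`. -/
def Smat (n : ℕ) : Matrix (Fin n → ZMod 2) (Fin n → ZMod 2) ℝ :=
  fun a b => sgn (bform a b)

/-- The diagonal matrix `D_v` with diagonal entry `(-1)^⟨u,v⟩` in position `u`. -/
def Dmat {n : ℕ} (v : Fin n → ZMod 2) :
    Matrix (Fin n → ZMod 2) (Fin n → ZMod 2) ℝ :=
  Matrix.diagonal fun u => sgn (bform u v)

/-- The translation permutation matrix `T_v`, with entry `1` in row `u`,
column `u + v`, for every `u`. -/
def Tmat {n : ℕ} (v : Fin n → ZMod 2) :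
    Matrix (Fin n → ZMod 2) (Fin n → ZMod 2) ℝ :=
  fun u w => if w = u + v then 1 else 0

/-- The permutation matrix `ρ(L)` of `L ∈ GL_n(F₂)` acting on `F₂ⁿ`: entry `1`
in row `u`, column `v`, exactly when `L v = u`. -/
def rho {n : ℕ} (L : Matrix (Fin n) (Fin n) (ZMod 2)) :
    Matrix (Fin n → ZMod 2) (Fin n → ZMod 2) ℝ :=
  fun u w => if L.mulVec w = u then 1 else 0

lemma sgn_add (x y : ZMod 2) : sgn (x + y) = sgn x * sgn y := by
  simp only [sgn, ZMod.val_add, ← pow_add]; rw [← neg_one_pow_eq_pow_mod_two]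

lemma sgn_sq (x : ZMod 2) : sgn x * sgn x = 1 := by
  fin_cases x <;> norm_num [sgn, ZMod.val]

lemma bform_eq_dot {n : ℕ} (a b : Fin n → ZMod 2) :
    bform a b = dotProduct a b := rfl

lemma bform_add_left {n : ℕ} (a b c : Fin n → ZMod 2) :
    bform (a + b) c = bform a c + bform b c := by
  simp [bform_eq_dot, add_dotProduct]

lemma bform_add_right {n : ℕ} (a b c : Fin n → ZMod 2) :
    bform a (b + c) = bform a b + bform a c := by
  simp [bform_eq_dot, dotProduct_add]

lemma bform_comm {n : ℕ} (a b : Fin n → ZMod 2) : bform a b = bform b a := by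
  simp [bform, mul_comm]

lemma DT_rho_apply {n : ℕ} (u v : Fin n → ZMod 2)
    (A : Matrix (Fin n) (Fin n) (ZMod 2)) (a c : Fin n → ZMod 2) :
    (Dmat u * Tmat v * rho A) a c
      = sgn (bform a u) * (if A.mulVec c = a + v then 1 else 0) := by
  simp [Dmat, Tmat, rho, Matrix.mul_apply, Matrix.diagonal, ite_mul, mul_ite,
    Finset.sum_ite_eq, Finset.sum_ite_eq']
  rw [Finset.sum_eq_single a]
  · simp
  · intro x _ hx
    simp [(Ne.symm hx : a ≠ x)]
  · simp

lemma sgn_sq' (x : ZMod 2) : sgn x ^ 2 = 1 := by rw [sq, sgn_sq]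

theorem stmt_4 (n : ℕ) (hn : 0 < n) (u v : Fin n → ZMod 2)
    (L : GL (Fin n) (ZMod 2)) :
    (Dmat u * Tmat v * rho (L : Matrix (Fin n) (Fin n) (ZMod 2))) * Smat n *
        (Dmat v * Tmat u * rho ((L⁻¹ : GL (Fin n) (ZMod 2)) :
          Matrix (Fin n) (Fin n) (ZMod 2)).transpose).transpose =
      sgn (bform u v) • Smat n := by
  ext a b
  set A : Matrix (Fin n) (Fin n) (ZMod 2) := (L : Matrix (Fin n) (Fin n) (ZMod 2)) with hA
  set M : Matrix (Fin n) (Fin n) (ZMod 2) :=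
    ((L⁻¹ : GL (Fin n) (ZMod 2)) : Matrix (Fin n) (Fin n) (ZMod 2)) with hM
  have hAM : A * M = 1 := by rw [hA, hM, ← Units.val_mul]; simp
  have hMA : M * A = 1 := by rw [hA, hM, ← Units.val_mul]; simp
  have hc : ∀ c, (A.mulVec c = a + v) = (c = M.mulVec (a + v)) := by
    intro c
    apply propext
    constructor
    · intro h
      rw [← h, Matrix.mulVec_mulVec, hMA, Matrix.one_mulVec]
    · rintro rfl
      rw [Matrix.mulVec_mulVec, hAM, Matrix.one_mulVec]
  have hd : ∀ d, (M.transpose.mulVec d = b + u) = (d = A.transpose.mulVec (b + u)) := by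
    intro d
    apply propext
    constructor
    · intro h
      rw [← h, Matrix.mulVec_mulVec, ← Matrix.transpose_mul, hMA, Matrix.transpose_one,
        Matrix.one_mulVec]
    · rintro rfl
      rw [Matrix.mulVec_mulVec, ← Matrix.transpose_mul, hAM, Matrix.transpose_one,
        Matrix.one_mulVec]
  have expand : (Dmat u * Tmat v * rho A * Smat n *
        (Dmat v * Tmat u * rho M.transpose).transpose) a b
      = ∑ d, (∑ c, (Dmat u * Tmat v * rho A) a c * Smat n c d) *
          (Dmat v * Tmat u * rho M.transpose) b d := by
    rw [Matrix.mul_apply]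
    refine Finset.sum_congr rfl fun d _ => ?_
    rw [Matrix.mul_apply, Matrix.transpose_apply]
  rw [expand]
  simp only [DT_rho_apply, hc, hd, mul_ite, ite_mul, mul_one, mul_zero, zero_mul, one_mul,
    Finset.sum_ite_eq', Finset.mem_univ, if_true, Matrix.smul_apply, smul_eq_mul]
  have hbf : bform (M.mulVec (a + v)) (A.transpose.mulVec (b + u)) = bform (a + v) (b + u) := by
    rw [bform_eq_dot, Matrix.mulVec_transpose, dotProduct_comm,
      Matrix.dotProduct_mulVec, Matrix.vecMul_vecMul, hAM, Matrix.vecMul_one,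
      bform_eq_dot, dotProduct_comm]
  rw [Smat, hbf, bform_add_left, bform_add_right, bform_add_right,
    sgn_add, sgn_add, sgn_add, bform_comm v b, bform_comm v u, Smat]
  have h1 := sgn_sq (bform a u)
  have h2 := sgn_sq (bform b v)
  linear_combination sgn (bform a b) * sgn (bform u v) * sgn (bform b v) * sgn (bform b v) * h1 +
    sgn (bform a b) * sgn (bform u v) * h2
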